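/- (Weak convergence of regularized solutions) Under the assumptions of the stability theorem (Conditions A and B), let y be attainable data, i.e., y ∈ K(dom R), let δₙ → 0 with D(y, yₙ) ≤ δₙ, choose αₙ > 0 with αₙ → 0 and δₙ/αₙ → 0, and let xₙ minimize x ↦ D(Kx, yₙ) + αₙR(x). Then: (a) (xₙ) has a weakly convergent subsequence; (b) every weak accumulation point is an R-minimizing solution of Kx = y; (c) along any weakly convergent subsequence with limit x‡ one has R(x_{τ(n)}) → R(x‡); (d) if the R-minimizing solution x‡ is unique, then xₙ ⇀ x‡. -/

import Mathlib

open Filter Topology ENNReal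
open scoped InnerProductSpace

/-- Weak convergence of a sequence in an inner product space. -/
def WeakConv {X : Type*} [NormedAddCommGroup X] [InnerProductSpace ℝ X]
    (x : ℕ → X) (x0 : X) : Prop :=
  ∀ y : X, Tendsto (fun n => ⟪x n, y⟫_ℝ) atTop (nhds ⟪x0, y⟫_ℝ)

lemma exists_weak_subseq {X : Type*} [NormedAddCommGroup X] [InnerProductSpace ℝ X]
    [CompleteSpace X] (x : ℕ → X) (C : ℝ) (hC : ∀ n, ‖x n‖ ≤ C) :
    ∃ (τ : ℕ → ℕ) (x0 : X), StrictMono τ ∧ WeakConv (fun n => x (τ n)) x0 := by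
  have hC0 : 0 ≤ C := (norm_nonneg _).trans (hC 0)
  set V : Submodule ℝ X := Submodule.span ℝ (Set.range x) with hV
  have hsep : TopologicalSpace.IsSeparable (V : Set X) :=
    (Set.countable_range x).isSeparable.span
  obtain ⟨c, hcc, hcs⟩ := hsep
  obtain ⟨d, hd⟩ := (hcc.insert 0).exists_eq_range (Set.insert_nonempty 0 c)
  have hcd : closure c ⊆ closure (Set.range d) :=
    closure_mono (by rw [← hd]; exact Set.subset_insert 0 c)
  have hVd : (V : Set X) ⊆ closure (Set.range d) := hcs.trans hcd
  -- compactness of pointwise evaluations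
  set g : ℕ → ℕ → ℝ := fun n i => ⟪x n, d i⟫_ℝ with hg
  set S : Set (ℕ → ℝ) := Set.pi Set.univ (fun i => Set.Icc (-(C * ‖d i‖)) (C * ‖d i‖)) with hS
  have hScomp : IsCompact S := isCompact_univ_pi fun i => isCompact_Icc
  have hgS : ∀ n, g n ∈ S := by
    intro n i _
    have h1 : |⟪x n, d i⟫_ℝ| ≤ ‖x n‖ * ‖d i‖ := abs_real_inner_le_norm _ _
    have h2 : ‖x n‖ * ‖d i‖ ≤ C * ‖d i‖ :=
      mul_le_mul_of_nonneg_right (hC n) (norm_nonneg _)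
    exact abs_le.mp (h1.trans h2)
  obtain ⟨L, -, τ, hτ, hconv⟩ := hScomp.tendsto_subseq hgS
  have hpt : ∀ i, Tendsto (fun n => ⟪x (τ n), d i⟫_ℝ) atTop (𝓝 (L i)) := by
    intro i
    exact (tendsto_pi_nhds.1 hconv i)
  -- Cauchy property on the closure of range d
  have hCau : ∀ w ∈ closure (Set.range d), CauchySeq (fun n => ⟪x (τ n), w⟫_ℝ) := by
    intro w hw
    rw [Metric.cauchySeq_iff]
    intro ε hε
    have hε' : 0 < ε / (3 * (C + 1)) := by positivity
    obtain ⟨a, ⟨i, rfl⟩, hai⟩ := Metric.mem_closure_iff.mp hw _ hε'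
    obtain ⟨N, hN⟩ := Metric.cauchySeq_iff.mp (hpt i).cauchySeq (ε / 3) (by positivity)
    refine ⟨N, fun m hm n hn => ?_⟩
    have key : ∀ k, |⟪x (τ k), w - d i⟫_ℝ| < ε / 3 := by
      intro k
      have h1 : |⟪x (τ k), w - d i⟫_ℝ| ≤ ‖x (τ k)‖ * ‖w - d i‖ := abs_real_inner_le_norm _ _
      have h2 : ‖x (τ k)‖ * ‖w - d i‖ ≤ (C + 1) * ‖w - d i‖ :=
        mul_le_mul_of_nonneg_right ((hC _).trans (by linarith)) (norm_nonneg _)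
      have h3 : (C + 1) * ‖w - d i‖ < (C + 1) * (ε / (3 * (C + 1))) := by
        have : ‖w - d i‖ < ε / (3 * (C + 1)) := by
          rw [← dist_eq_norm]; exact hai
        exact mul_lt_mul_of_pos_left this (by linarith)
      have h4 : (C + 1) * (ε / (3 * (C + 1))) = ε / 3 := by
        field_simp
      linarith [h1.trans h2]
    have hmid := hN m hm n hn
    rw [Real.dist_eq] at hmid ⊢
    have hdecomp : ⟪x (τ m), w⟫_ℝ - ⟪x (τ n), w⟫_ℝ =
        ⟪x (τ m), w - d i⟫_ℝ + (⟪x (τ m), d i⟫_ℝ - ⟪x (τ n), d i⟫_ℝ)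
          - ⟪x (τ n), w - d i⟫_ℝ := by
      simp [inner_sub_right]; try ring
    calc |⟪x (τ m), w⟫_ℝ - ⟪x (τ n), w⟫_ℝ|
        ≤ |⟪x (τ m), w - d i⟫_ℝ| + |⟪x (τ m), d i⟫_ℝ - ⟪x (τ n), d i⟫_ℝ|
            + |⟪x (τ n), w - d i⟫_ℝ| := by
          rw [hdecomp]
          exact (abs_sub _ _).trans (add_le_add_left (abs_add_le _ _) _)
      _ < ε / 3 + ε / 3 + ε / 3 := by
          exact add_lt_add (add_lt_add (key m) hmid) (key n)
      _ = ε := by ring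
  -- all inner products converge via orthogonal projection
  set Vc := V.topologicalClosure with hVc
  haveI : CompleteSpace Vc := (V.isClosed_topologicalClosure).completeSpace_coe
  have hxV : ∀ k, x k ∈ Vc := fun k =>
    V.le_topologicalClosure (Submodule.subset_span (Set.mem_range_self k))
  have hVcd : (Vc : Set X) ⊆ closure (Set.range d) := by
    rw [hVc, Submodule.topologicalClosure_coe]
    have := closure_mono hVd
    rwa [closure_closure] at this
  have hlim : ∀ w : X, ∃ l, Tendsto (fun n => ⟪x (τ n), w⟫_ℝ) atTop (𝓝 l) := by
    intro w
    set P := (Vc.orthogonalProjectionOnto w : X) with hP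
    have hperp : w - P ∈ Vcᗮ := Submodule.sub_starProjection_mem_orthogonal w
    have heq : ∀ k, ⟪x (τ k), w⟫_ℝ = ⟪x (τ k), P⟫_ℝ := by
      intro k
      have h0 : ⟪x (τ k), w - P⟫_ℝ = 0 := hperp _ (hxV (τ k))
      rw [inner_sub_right] at h0
      linarith
    have hPc : P ∈ closure (Set.range d) := hVcd (Vc.orthogonalProjectionOnto w).2
    obtain ⟨l, hl⟩ := cauchySeq_tendsto_of_complete (hCau P hPc)
    exact ⟨l, by simp only [heq]; exact hl⟩
  choose F hF using hlim
  have hFadd : ∀ a b, F (a + b) = F a + F b := by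
    intro a b
    refine tendsto_nhds_unique (hF (a + b)) ?_
    have := (hF a).add (hF b)
    simpa [inner_add_right] using this
  have hFsmul : ∀ (r : ℝ) (a : X), F (r • a) = r * F a := by
    intro r a
    refine tendsto_nhds_unique (hF (r • a)) ?_
    have := (hF a).const_mul r
    simpa [real_inner_smul_right] using this
  have hFb : ∀ w, ‖F w‖ ≤ C * ‖w‖ := by
    intro w
    rw [Real.norm_eq_abs]
    refine le_of_tendsto (hF w).abs (Filter.Eventually.of_forall fun n => ?_)
    exact (abs_real_inner_le_norm _ _).trans
      (mul_le_mul_of_nonneg_right (hC _) (norm_nonneg _))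
  let flin : X →ₗ[ℝ] ℝ :=
    { toFun := F
      map_add' := hFadd
      map_smul' := hFsmul }
  let fcont : X →L[ℝ] ℝ := flin.mkContinuous C hFb
  set x0 := (InnerProductSpace.toDual ℝ X).symm fcont with hx0
  have hx0w : ∀ w, ⟪x0, w⟫_ℝ = F w := by
    intro w
    have : InnerProductSpace.toDual ℝ X x0 w = fcont w := by
      rw [hx0, LinearIsometryEquiv.apply_symm_apply]
    exact this
  exact ⟨τ, x0, hτ, fun w => by rw [hx0w w]; exact hF w⟩

theorem anett_weak_convergence
    {X : Type*} [NormedAddCommGroup X] [InnerProductSpace ℝ X] [CompleteSpace X]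
    {Y : Type*} [NormedAddCommGroup Y] [InnerProductSpace ℝ Y] [CompleteSpace Y]
    (K : X → Y)
    (hK : ∀ (x : ℕ → X) (x0 : X), WeakConv x x0 → WeakConv (fun n => K (x n)) (K x0))
    (R : X → ℝ≥0∞)
    (hcoercive : ∀ x : ℕ → X,
      (∃ M : ℝ≥0∞, M ≠ ⊤ ∧ ∀ n, R (x n) ≤ M) → ∃ C : ℝ, ∀ n, ‖x n‖ ≤ C)
    (hRlsc : ∀ (x : ℕ → X) (x0 : X), WeakConv x x0 →
      R x0 ≤ Filter.liminf (fun n => R (x n)) atTop)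
    (D : Y → Y → ℝ≥0∞)
    (hDdef : ∀ y₀ y₁ : Y, D y₀ y₁ = 0 ↔ y₀ = y₁)
    (hDlsc : ∀ (useq : ℕ → Y) (u : Y) (vseq : ℕ → Y) (v : Y),
      WeakConv useq u → Tendsto vseq atTop (nhds v) →
      D u v ≤ Filter.liminf (fun n => D (useq n) (vseq n)) atTop)
    (hDnorm : ∀ (v : Y) (vseq : ℕ → Y),
      Tendsto (fun n => D v (vseq n)) atTop (nhds 0) → Tendsto vseq atTop (nhds v))
    -- attainable data
    (y : Y) (hattain : ∃ x : X, K x = y ∧ R x ≠ ⊤)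
    (δ : ℕ → ℝ) (hδpos : ∀ n, 0 < δ n) (hδ0 : Tendsto δ atTop (nhds 0))
    (yseq : ℕ → Y) (hnoise : ∀ n, D y (yseq n) ≤ ENNReal.ofReal (δ n))
    (α : ℕ → ℝ) (hαpos : ∀ n, 0 < α n) (hα0 : Tendsto α atTop (nhds 0))
    (hδα : Tendsto (fun n => δ n / α n) atTop (nhds 0))
    (x : ℕ → X)
    (hxmin : ∀ n, ∀ x' : X,
      D (K (x n)) (yseq n) + ENNReal.ofReal (α n) * R (x n) ≤
        D (K x') (yseq n) + ENNReal.ofReal (α n) * R x') :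
    -- (a) weakly convergent subsequence exists
    (∃ (τ : ℕ → ℕ) (xdag : X), StrictMono τ ∧ WeakConv (fun n => x (τ n)) xdag) ∧
    -- (b),(c) accumulation points are R-minimizing solutions and R converges along them
    (∀ (τ : ℕ → ℕ) (xdag : X), StrictMono τ → WeakConv (fun n => x (τ n)) xdag →
      (K xdag = y ∧ ∀ x' : X, K x' = y → R xdag ≤ R x') ∧
      Tendsto (fun n => R (x (τ n))) atTop (nhds (R xdag))) ∧
    -- (d) uniqueness implies weak convergence of the whole sequence
    (∀ xdag : X, (K xdag = y ∧ ∀ x' : X, K x' = y → R xdag ≤ R x') →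
      (∀ x'' : X, (K x'' = y ∧ ∀ x' : X, K x' = y → R x'' ≤ R x') → x'' = xdag) →
      WeakConv x xdag) := by
  obtain ⟨xb, hxbK, hxbR⟩ := hattain
  -- basic convergences in ℝ≥0∞
  have hofδ : Tendsto (fun n => ENNReal.ofReal (δ n)) atTop (𝓝 0) := by
    simpa using ENNReal.tendsto_ofReal hδ0
  have hofα : Tendsto (fun n => ENNReal.ofReal (α n)) atTop (𝓝 0) := by
    simpa using ENNReal.tendsto_ofReal hα0
  have hofδα : Tendsto (fun n => ENNReal.ofReal (δ n / α n)) atTop (𝓝 0) := by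
    simpa using ENNReal.tendsto_ofReal hδα
  -- noisy data converge to y
  have hyto : Tendsto yseq atTop (𝓝 y) := by
    refine hDnorm y yseq ?_
    exact tendsto_of_tendsto_of_tendsto_of_le_of_le tendsto_const_nhds hofδ
      (fun n => zero_le) hnoise
  -- the basic variational inequality
  have hbase : ∀ x', K x' = y → ∀ n,
      D (K (x n)) (yseq n) + ENNReal.ofReal (α n) * R (x n) ≤
        ENNReal.ofReal (δ n) + ENNReal.ofReal (α n) * R x' := by
    intro x' hx' n
    refine (hxmin n x').trans (add_le_add_left ?_ _)
    rw [hx']; exact hnoise n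
  -- bound on R (x n)
  have hRb : ∀ x', K x' = y → ∀ n,
      R (x n) ≤ ENNReal.ofReal (δ n / α n) + R x' := by
    intro x' hx' n
    have ha0 : (ENNReal.ofReal (α n)) ≠ 0 := (ENNReal.ofReal_pos.mpr (hαpos n)).ne'
    have hat : (ENNReal.ofReal (α n)) ≠ ⊤ := ENNReal.ofReal_ne_top
    rw [← ENNReal.mul_le_mul_iff_right ha0 hat]
    calc ENNReal.ofReal (α n) * R (x n)
        ≤ D (K (x n)) (yseq n) + ENNReal.ofReal (α n) * R (x n) := le_add_self
      _ ≤ ENNReal.ofReal (δ n) + ENNReal.ofReal (α n) * R x' := hbase x' hx' n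
      _ = ENNReal.ofReal (α n) * (ENNReal.ofReal (δ n / α n) + R x') := by
          rw [mul_add, ← ENNReal.ofReal_mul (hαpos n).le,
            mul_comm (α n) (δ n / α n), div_mul_cancel₀ _ (hαpos n).ne']
  -- discrepancy tends to zero
  have hDto0 : Tendsto (fun n => D (K (x n)) (yseq n)) atTop (𝓝 0) := by
    have hub : ∀ n, D (K (x n)) (yseq n) ≤
        ENNReal.ofReal (δ n) + ENNReal.ofReal (α n) * R xb := fun n =>
      le_trans (self_le_add_right _ _) (hbase xb hxbK n)
    have hrhs : Tendsto (fun n => ENNReal.ofReal (δ n) + ENNReal.ofReal (α n) * R xb)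
        atTop (𝓝 0) := by
      have h1 : Tendsto (fun n => ENNReal.ofReal (α n) * R xb) atTop (𝓝 0) := by
        have := ENNReal.Tendsto.mul_const hofα (Or.inr hxbR)
        simpa using this
      simpa using hofδ.add h1
    exact tendsto_of_tendsto_of_tendsto_of_le_of_le tendsto_const_nhds hrhs
      (fun n => zero_le) hub
  -- the key lemma for parts (b), (c), (d)
  have key : ∀ τ : ℕ → ℕ, Tendsto τ atTop atTop → ∀ xdag : X,
      WeakConv (fun n => x (τ n)) xdag →
      (K xdag = y ∧ ∀ x' : X, K x' = y → R xdag ≤ R x') ∧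
      Tendsto (fun n => R (x (τ n))) atTop (𝓝 (R xdag)) := by
    intro τ hτ xdag hw
    have hKeq : K xdag = y := by
      have hlsc := hDlsc (fun n => K (x (τ n))) (K xdag) (fun n => yseq (τ n)) y
        (hK _ _ hw) (hyto.comp hτ)
      have hlim0 : Filter.liminf (fun n => D (K (x (τ n))) (yseq (τ n))) atTop = 0 :=
        (hDto0.comp hτ).liminf_eq
      rw [hlim0] at hlsc
      exact (hDdef _ _).mp (le_zero_iff.mp hlsc)
    have hlimsup : ∀ x' : X, K x' = y →
        Filter.limsup (fun n => R (x (τ n))) atTop ≤ R x' := by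
      intro x' hx'
      have h1 : Filter.limsup (fun n => R (x (τ n))) atTop ≤
          Filter.limsup (fun n => ENNReal.ofReal (δ (τ n) / α (τ n)) + R x') atTop :=
        Filter.limsup_le_limsup (Filter.Eventually.of_forall fun n => hRb x' hx' (τ n))
      have h2 : Tendsto (fun n => ENNReal.ofReal (δ (τ n) / α (τ n)) + R x')
          atTop (𝓝 (R x')) := by
        have := (hofδα.comp hτ).add (tendsto_const_nhds (x := R x'))
        simpa using this
      rw [h2.limsup_eq] at h1
      exact h1
    have hliminf : R xdag ≤ Filter.liminf (fun n => R (x (τ n))) atTop := hRlsc _ _ hw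
    have hmin : ∀ x' : X, K x' = y → R xdag ≤ R x' := fun x' hx' =>
      hliminf.trans ((Filter.liminf_le_limsup (u := fun n => R (x (τ n)))).trans (hlimsup x' hx'))
    refine ⟨⟨hKeq, hmin⟩, ?_⟩
    exact tendsto_of_le_liminf_of_limsup_le hliminf (hlimsup xdag hKeq)
  -- uniform bound on R, hence on norms
  obtain ⟨cb, hcb⟩ := hδα.bddAbove_range
  have hRbound : ∃ M : ℝ≥0∞, M ≠ ⊤ ∧ ∀ n, R (x n) ≤ M := by
    refine ⟨ENNReal.ofReal cb + R xb, ENNReal.add_ne_top.mpr ⟨ENNReal.ofReal_ne_top, hxbR⟩,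
      fun n => ?_⟩
    refine (hRb xb hxbK n).trans (add_le_add_left (ENNReal.ofReal_le_ofReal ?_) _)
    exact hcb (Set.mem_range_self n)
  obtain ⟨C, hC⟩ := hcoercive x hRbound
  refine ⟨exists_weak_subseq x C hC, fun τ xdag hτ hw => key τ hτ.tendsto_atTop xdag hw, ?_⟩
  -- (d)
  intro xdag hdag huniq w
  refine tendsto_of_subseq_tendsto fun ns hns => ?_
  obtain ⟨ρ, x'', hρ, hw''⟩ := exists_weak_subseq (fun n => x (ns n)) C (fun n => hC _)
  have hcomp : Tendsto (fun n => ns (ρ n)) atTop atTop := hns.comp hρ.tendsto_atTop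
  have hkey := key _ hcomp x'' hw''
  have hx'' : x'' = xdag := huniq x'' hkey.1
  exact ⟨ρ, by rw [← hx'']; exact hw'' w⟩
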